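/- Let {[a_M, b_M] : M ∈ M} be α max optimal acceptance intervals for a set M of parameter values. Then the reflected intervals [n − b_{N−M}, n − a_{N−M}], indexed by M in {N − M' : M' ∈ M}, are α max optimal for that reflected index set. -/
import Mathlib


def hyperPMF (M n N x : ℕ) : ℚ :=
  if x ≤ n then (M.choose x * (N - M).choose (n - x) : ℚ) / (N.choose n) else 0

/-- The interval [a,b] ⊆ {0,…,n} is α max optimal for M: it is a level-α acceptance
interval of minimal cardinality, all of whose points have positive P_M-probability,
maximizing P_M-probability among subsets of the same cardinality. -/
def AlphaMaxOpt (n N : ℕ) (α : ℚ) (M a b : ℕ) : Prop :=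
  a ≤ b ∧ b ≤ n ∧
    (1 - α ≤ ∑ x ∈ Finset.Icc a b, hyperPMF M n N x) ∧
    (∀ T : Finset ℕ, T ⊆ Finset.range (n + 1) → T.card < b - a + 1 →
      (∑ x ∈ T, hyperPMF M n N x) < 1 - α) ∧
    (∀ x ∈ Finset.Icc a b, 0 < hyperPMF M n N x) ∧
    (∀ T : Finset ℕ, T ⊆ Finset.range (n + 1) → T.card = b - a + 1 →
      (∑ x ∈ T, hyperPMF M n N x) ≤ ∑ x ∈ Finset.Icc a b, hyperPMF M n N x)

lemma hyper_symm (M n N x : ℕ) (hM : M ≤ N) (hx : x ≤ n) :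
    hyperPMF (N - M) n N x = hyperPMF M n N (n - x) := by
  unfold hyperPMF
  rw [if_pos hx, if_pos (Nat.sub_le n x), Nat.sub_sub_self hM, Nat.sub_sub_self hx]
  ring

lemma reflect_injOn (n : ℕ) (T : Finset ℕ) (hT : T ⊆ Finset.range (n + 1)) :
    Set.InjOn (fun x => n - x) T := by
  intro x hx y hy h
  have hxn : x ≤ n := Nat.lt_succ_iff.mp (Finset.mem_range.mp (hT hx))
  have hyn : y ≤ n := Nat.lt_succ_iff.mp (Finset.mem_range.mp (hT hy))
  have h' : n - x = n - y := h
  omega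

lemma sum_reflect (M n N : ℕ) (hM : M ≤ N) (T : Finset ℕ)
    (hT : T ⊆ Finset.range (n + 1)) :
    (∑ x ∈ T, hyperPMF (N - M) n N x)
      = ∑ x ∈ T.image (fun x => n - x), hyperPMF M n N x := by
  rw [Finset.sum_image (fun x hx y hy h => reflect_injOn n T hT hx hy h)]
  refine Finset.sum_congr rfl fun x hx => ?_
  have hxn : x ≤ n := Nat.lt_succ_iff.mp (Finset.mem_range.mp (hT hx))
  exact hyper_symm M n N x hM hxn

lemma image_reflect_subset (n : ℕ) (T : Finset ℕ) :
    T.image (fun x => n - x) ⊆ Finset.range (n + 1) := by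
  intro y hy
  obtain ⟨x, _, rfl⟩ := Finset.mem_image.mp hy
  simp [Nat.lt_succ_iff]

lemma image_reflect_reflect (n : ℕ) (T : Finset ℕ) (hT : T ⊆ Finset.range (n + 1)) :
    (T.image (fun x => n - x)).image (fun x => n - x) = T := by
  ext y
  simp only [Finset.image_image, Finset.mem_image, Function.comp_apply]
  constructor
  · rintro ⟨x, hx, rfl⟩
    have hxn : x ≤ n := Nat.lt_succ_iff.mp (Finset.mem_range.mp (hT hx))
    have : n - (n - x) = x := by omega
    rw [this]; exact hx
  · intro hy
    have hyn : y ≤ n := Nat.lt_succ_iff.mp (Finset.mem_range.mp (hT hy))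
    exact ⟨y, hy, by omega⟩

lemma icc_reflect (n a b : ℕ) (hab : a ≤ b) (hbn : b ≤ n) :
    (Finset.Icc (n - b) (n - a)) = (Finset.Icc a b).image (fun x => n - x) := by
  ext y
  simp only [Finset.mem_Icc, Finset.mem_image]
  constructor
  · intro hy
    exact ⟨n - y, by omega, by omega⟩
  · rintro ⟨x, hx, rfl⟩
    omega

/-- Reflection preserves α max optimality: if {[a_M, b_M] : M ∈ 𝓜} is α max optimal,
then the reflected intervals [n − b_M, n − a_M] are α max optimal for the reflected
parameters N − M. -/
theorem alphaMaxOpt_reflect (n N : ℕ) (α : ℚ) (hn : 0 < n) (hnN : n ≤ N)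
    (hα0 : 0 < α) (hα1 : α < 1) (Mset : Set ℕ) (a b : ℕ → ℕ)
    (hopt : ∀ M ∈ Mset, M ≤ N ∧ AlphaMaxOpt n N α M (a M) (b M)) :
    ∀ M ∈ Mset, AlphaMaxOpt n N α (N - M) (n - b M) (n - a M) := by
  intro M hM
  obtain ⟨hMN, hab, hbn, hcov, hmin, hpos, hmax⟩ := hopt M hM
  have hIccsub : Finset.Icc (a M) (b M) ⊆ Finset.range (n + 1) := by
    intro x hx
    simp only [Finset.mem_Icc] at hx
    simp only [Finset.mem_range, Nat.lt_succ_iff]; omega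
  have hIccsub' : Finset.Icc (n - b M) (n - a M) ⊆ Finset.range (n + 1) := by
    intro x hx
    simp only [Finset.mem_Icc] at hx
    simp only [Finset.mem_range, Nat.lt_succ_iff]; omega
  have hIccsum : (∑ x ∈ Finset.Icc (n - b M) (n - a M), hyperPMF (N - M) n N x)
      = ∑ x ∈ Finset.Icc (a M) (b M), hyperPMF M n N x := by
    rw [sum_reflect M n N hMN _ hIccsub']
    congr 1
    rw [icc_reflect n (a M) (b M) hab hbn, image_reflect_reflect n _ hIccsub]
  refine ⟨by omega, by omega, ?_, ?_, ?_, ?_⟩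
  · rw [hIccsum]; exact hcov
  · intro T hT hcardT
    rw [sum_reflect M n N hMN T hT]
    apply hmin _ (image_reflect_subset n T)
    calc (T.image (fun x => n - x)).card ≤ T.card := Finset.card_image_le
      _ < b M - a M + 1 := by omega
  · intro x hx
    simp only [Finset.mem_Icc] at hx
    have hxn : x ≤ n := by omega
    rw [hyper_symm M n N x hMN hxn]
    apply hpos
    simp only [Finset.mem_Icc]; omega
  · intro T hT hcardT
    rw [sum_reflect M n N hMN T hT, hIccsum]
    apply hmax _ (image_reflect_subset n T)
    rw [Finset.card_image_of_injOn (reflect_injOn n T hT)]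
    omega
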